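/- Let Q be a rack. The right multiplication group Rmlt(Q) is abelian if and only if x*(y*z) = x*y holds for all x, y, z in Q. -/
import Mathlib


/-- A (right) rack: a set with a binary operation `mul` such that every right
translation `R_x : y ↦ y * x` is a bijection (with inverse given by the right
division `div`), satisfying right self-distributivity. -/
class RightRack (Q : Type*) where
  mul : Q → Q → Q
  div : Q → Q → Q
  div_mul : ∀ x y : Q, mul (div x y) y = x
  mul_div : ∀ x y : Q, div (mul x y) y = x
  self_distrib : ∀ x y z : Q, mul (mul x y) z = mul (mul x z) (mul y z)

namespace RightRack

/-- The right translation `R_x` as a permutation of `Q`. -/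
def rt {Q : Type*} [RightRack Q] (x : Q) : Equiv.Perm Q where
  toFun y := mul y x
  invFun y := div y x
  left_inv y := mul_div y x
  right_inv y := div_mul y x

/-- The right multiplication group `Rmlt(Q)`: the subgroup of the symmetric group
on `Q` generated by all right translations. -/
def rmlt (Q : Type*) [RightRack Q] : Subgroup (Equiv.Perm Q) :=
  Subgroup.closure (Set.range (rt : Q → Equiv.Perm Q))

end RightRack

/-- A quandle: an idempotent rack. -/
class RightQuandle (Q : Type*) extends RightRack Q where
  idem : ∀ x : Q, mul x x = x

/-- Let `Q` be a rack. The right multiplication group `Rmlt(Q)` is abelian if and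
only if `x*(y*z) = x*y` holds for all `x, y, z` in `Q`. -/
theorem rmlt_abelian_iff_absorb {Q : Type*} [RightRack Q] :
    (∀ g ∈ RightRack.rmlt Q, ∀ h ∈ RightRack.rmlt Q, g * h = h * g) ↔
      (∀ x y z : Q, RightRack.mul x (RightRack.mul y z) = RightRack.mul x y) := by
  constructor
  · intro h x y z
    have hm : ∀ w : Q, RightRack.rt w ∈ RightRack.rmlt Q := fun w =>
      Subgroup.subset_closure (Set.mem_range_self w)
    have := h (RightRack.rt z) (hm z) (RightRack.rt y) (hm y)
    have h2 := congrArg (fun f => (f : Equiv.Perm Q) (RightRack.div x z)) this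
    simp only [Equiv.Perm.mul_apply, RightRack.rt] at h2
    simp only [Equiv.coe_fn_mk] at h2
    rw [RightRack.self_distrib, RightRack.div_mul] at h2
    exact h2
  · intro h g hg k hk
    have key : ∀ x y : Q, RightRack.rt x * RightRack.rt y = RightRack.rt y * RightRack.rt x := by
      intro x y
      ext a
      simp only [Equiv.Perm.mul_apply, RightRack.rt, Equiv.coe_fn_mk]
      rw [RightRack.self_distrib, h]
    induction hg, hk using Subgroup.closure_induction₂ with
    | mem x y hx hy =>
      obtain ⟨a, rfl⟩ := hx
      obtain ⟨b, rfl⟩ := hy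
      exact key a b
    | one_left x hx => simp
    | one_right x hx => simp
    | mul_left x y z hx hy hz h1 h2 => rw [mul_assoc, h2, ← mul_assoc, h1, mul_assoc]
    | mul_right y z x hy hz hx h1 h2 => rw [← mul_assoc, h1, mul_assoc, h2, ← mul_assoc]
    | inv_left x y hx hy h1 => exact Commute.inv_left h1
    | inv_right x y hx hy h1 => exact Commute.inv_right h1
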